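/- If pointed Kripke models (M,s) and (M',s') are ±-bisimilar, then for every GLAL formula θ and every coalition A ⊆ Ag, the refined pointed models (M⁻_(s,θ,A), s) and (M'⁻_(s',θ,A), s') are ±-bisimilar, and likewise (M⁺_(s,θ,A), s) and (M'⁺_(s',θ,A), s') are ±-bisimilar. -/
import Mathlib


/-- Formulas of GLAL: atoms, negation, conjunction, common knowledge `C_A`,
global announcement `[φ]⁺_A ψ` (`annP`) and local announcement `[φ]⁻_A ψ` (`annM`). -/
inductive Form (AP Ag : Type) : Type
  | atom : AP → Form AP Ag
  | neg  : Form AP Ag → Form AP Ag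
  | and  : Form AP Ag → Form AP Ag → Form AP Ag
  | ck   : Set Ag → Form AP Ag → Form AP Ag
  | annP : Form AP Ag → Set Ag → Form AP Ag → Form AP Ag
  | annM : Form AP Ag → Set Ag → Form AP Ag → Form AP Ag

/-- A Kripke model over worlds `W`: a relation for each agent and a valuation.
(The requirement that each relation is an equivalence relation is stated
separately, as a hypothesis, where needed.) -/
structure KModel (AP Ag W : Type) where
  R : Ag → W → W → Prop
  V : AP → Set W

variable {AP Ag : Type}

/-- `R^C_A`: the reflexive-transitive closure of the union of the relations
of the agents in `A`. -/
def ckRel {W : Type} (M : KModel AP Ag W) (A : Set Ag) : W → W → Prop :=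
  Relation.ReflTransGen (fun v u => ∃ a ∈ A, M.R a v u)

/-- The local refinement `M⁻_(w,X,A)` of `M` w.r.t. world `w`, a set `X` of worlds
(the satisfaction set of the announced formula) and coalition `A`:
for `a ∉ A` the relation is unchanged; for `a ∈ A`, if `v ∈ R_a(w)` then the
equivalence class of `v` is split according to membership in `X`. -/
def KModel.refM {W : Type} (M : KModel AP Ag W) (w : W) (X : Set W) (A : Set Ag) :
    KModel AP Ag W where
  R a v u := M.R a v u ∧ (a ∈ A → M.R a w v → (v ∈ X ↔ u ∈ X))
  V := M.V

/-- The global refinement `M⁺_(w,X,A)`: as the local one, but with test set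
`R^C_A(w)` instead of `R_a(w)`. -/
def KModel.refP {W : Type} (M : KModel AP Ag W) (w : W) (X : Set W) (A : Set Ag) :
    KModel AP Ag W where
  R a v u := M.R a v u ∧ (a ∈ A → ckRel M A w v → (v ∈ X ↔ u ∈ X))
  V := M.V

/-- GLAL satisfaction `(M,w) ⊨ φ`. -/
def sat {W : Type} : Form AP Ag → KModel AP Ag W → W → Prop
  | .atom p, M, w => w ∈ M.V p
  | .neg φ, M, w => ¬ sat φ M w
  | .and φ ψ, M, w => sat φ M w ∧ sat ψ M w
  | .ck A φ, M, w => ∀ v, ckRel M A w v → sat φ M v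
  | .annM φ A ψ, M, w => sat φ M w → sat ψ (M.refM w {v | sat φ M v} A) w
  | .annP φ A ψ, M, w => sat φ M w → sat ψ (M.refP w {v | sat φ M v} A) w

/-- Validity: truth at every world of every Kripke model (all of whose
relations are equivalence relations). -/
def Valid (φ : Form AP Ag) : Prop :=
  ∀ (W : Type) (M : KModel AP Ag W), (∀ a, Equivalence (M.R a)) → ∀ w : W, sat φ M w

/-- `φ → ψ` as the usual abbreviation `¬(φ ∧ ¬ψ)`. -/
def Form.impl (φ ψ : Form AP Ag) : Form AP Ag := .neg (.and φ (.neg ψ))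

/-- `φ ↔ ψ` as the usual abbreviation. -/
def Form.biimpl (φ ψ : Form AP Ag) : Form AP Ag := .and (φ.impl ψ) (ψ.impl φ)

/-- `R_A(w,v)`: `R_a(w,v)` holds for exactly the agents `a ∈ A`. -/
def RA {W : Type} (M : KModel AP Ag W) (A : Set Ag) (w v : W) : Prop :=
  ∀ a : Ag, M.R a w v ↔ a ∈ A

/-- A ±-simulation between two Kripke models: Atoms, Forth and Reach. -/
def IsPMSim {W W' : Type} (M : KModel AP Ag W) (M' : KModel AP Ag W')
    (S : W → W' → Prop) : Prop :=
  ∀ w w', S w w' →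
    (∀ p, w ∈ M.V p ↔ w' ∈ M'.V p) ∧
    (∀ (A : Set Ag) (v : W), RA M A w v → ∃ v', RA M' A w' v' ∧ S v v') ∧
    (∀ v v', S v v' → ∀ a, M.R a w v ↔ M'.R a w' v')

/-- A ±-bisimulation: both it and its converse are ±-simulations. -/
def IsPMBisim {W W' : Type} (M : KModel AP Ag W) (M' : KModel AP Ag W')
    (B : W → W' → Prop) : Prop :=
  IsPMSim M M' B ∧ IsPMSim M' M (fun w' w => B w w')

section Aux

variable {W W' : Type}

lemma bisim_flip {M : KModel AP Ag W} {M' : KModel AP Ag W'} {B : W → W' → Prop}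
    (h : IsPMBisim M M' B) : IsPMBisim M' M (fun w' w => B w w') := ⟨h.2, h.1⟩

lemma match_world {M : KModel AP Ag W} {M' : KModel AP Ag W'} {S : W → W' → Prop}
    (hS : IsPMSim M M' S) {w : W} {w' : W'} (hww : S w w') (v : W) :
    ∃ v', S v v' ∧ ∀ a, M.R a w v ↔ M'.R a w' v' := by
  obtain ⟨v', hRA, hB⟩ := (hS w w' hww).2.1 {a | M.R a w v} v (fun a => Iff.rfl)
  exact ⟨v', hB, fun a => (hRA a).symm⟩

lemma double_partner {M : KModel AP Ag W} {M' : KModel AP Ag W'} {B : W → W' → Prop}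
    (hB : IsPMSim M M' B) (hM : ∀ a, Equivalence (M.R a))
    {w : W} {w' w'' : W'} (h1 : B w w') (h2 : B w w'') (a : Ag) : M'.R a w' w'' :=
  ((hB w w' h1).2.2 w w'' h2 a).mp ((hM a).refl w)

lemma ckRel_exists {M : KModel AP Ag W} {M' : KModel AP Ag W'} {S : W → W' → Prop}
    (hS : IsPMSim M M' S) {A : Set Ag} {s w : W} {s' : W'} (hss : S s s')
    (h : ckRel M A s w) : ∃ w', ckRel M' A s' w' ∧ S w w' := by
  induction h with
  | refl => exact ⟨s', Relation.ReflTransGen.refl, hss⟩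
  | tail _ hstep ih =>
    obtain ⟨x', hck, hx⟩ := ih
    obtain ⟨u', hu, hedge⟩ := match_world hS hx _
    obtain ⟨a, ha, hR⟩ := hstep
    exact ⟨u', hck.tail ⟨a, ha, (hedge a).mp hR⟩, hu⟩

lemma ckRel_iff {M : KModel AP Ag W} {M' : KModel AP Ag W'} {B : W → W' → Prop}
    (hB : IsPMBisim M M' B) (hM : ∀ a, Equivalence (M.R a))
    (hM' : ∀ a, Equivalence (M'.R a)) {A : Set Ag} (hA : A.Nonempty)
    {s w : W} {s' w' : W'} (hss : B s s') (hww : B w w') :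
    ckRel M A s w ↔ ckRel M' A s' w' := by
  obtain ⟨a₀, ha₀⟩ := hA
  constructor
  · intro h
    obtain ⟨w'', hck, h2⟩ := ckRel_exists hB.1 hss h
    exact hck.tail ⟨a₀, ha₀, (hM' a₀).symm (double_partner hB.1 hM hww h2 a₀)⟩
  · intro h
    obtain ⟨w₂, hck, h2⟩ := ckRel_exists hB.2 hss h
    exact hck.tail ⟨a₀, ha₀, (hM a₀).symm (double_partner hB.2 hM' hww h2 a₀)⟩

lemma refM_equiv {M : KModel AP Ag W} (hM : ∀ a, Equivalence (M.R a))
    (s : W) (X : Set W) (A : Set Ag) : ∀ a, Equivalence ((M.refM s X A).R a) := by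
  intro a
  refine ⟨fun v => ⟨(hM a).refl v, fun _ _ => Iff.rfl⟩, ?_, ?_⟩
  · rintro v u ⟨h1, h2⟩
    exact ⟨(hM a).symm h1, fun ha hr => (h2 ha ((hM a).trans hr ((hM a).symm h1))).symm⟩
  · rintro v u t ⟨h1, h2⟩ ⟨h3, h4⟩
    exact ⟨(hM a).trans h1 h3, fun ha hr => (h2 ha hr).trans (h4 ha ((hM a).trans hr h1))⟩

lemma refP_equiv {M : KModel AP Ag W} (hM : ∀ a, Equivalence (M.R a))
    (s : W) (X : Set W) (A : Set Ag) : ∀ a, Equivalence ((M.refP s X A).R a) := by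
  intro a
  refine ⟨fun v => ⟨(hM a).refl v, fun _ _ => Iff.rfl⟩, ?_, ?_⟩
  · rintro v u ⟨h1, h2⟩
    exact ⟨(hM a).symm h1, fun ha hck =>
      (h2 ha (hck.tail ⟨a, ha, (hM a).symm h1⟩)).symm⟩
  · rintro v u t ⟨h1, h2⟩ ⟨h3, h4⟩
    exact ⟨(hM a).trans h1 h3, fun ha hck =>
      (h2 ha hck).trans (h4 ha (hck.tail ⟨a, ha, h1⟩))⟩

lemma refM_sim {M : KModel AP Ag W} {M' : KModel AP Ag W'} {B : W → W' → Prop}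
    (hB : IsPMBisim M M' B) {X : Set W} {X' : Set W'}
    (hX : ∀ v v', B v v' → (v ∈ X ↔ v' ∈ X')) {A : Set Ag}
    {s : W} {s' : W'} (hss : B s s') :
    IsPMSim (M.refM s X A) (M'.refM s' X' A) B := by
  intro w w' hww
  have cond : ∀ v v', B v v' → ∀ a,
      ((a ∈ A → M.R a s w → (w ∈ X ↔ v ∈ X)) ↔
        (a ∈ A → M'.R a s' w' → (w' ∈ X' ↔ v' ∈ X'))) := by
    intro v v' hv a
    have h1 : M.R a s w ↔ M'.R a s' w' := (hB.1 s s' hss).2.2 w w' hww a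
    have h2 := hX w w' hww
    have h3 := hX v v' hv
    constructor
    · intro h ha hr; rw [← h2, ← h3]; exact h ha (h1.mpr hr)
    · intro h ha hr; rw [h2, h3]; exact h ha (h1.mp hr)
  refine ⟨(hB.1 w w' hww).1, ?_, ?_⟩
  · intro A₀ v hv
    obtain ⟨v', hvv, hedge⟩ := match_world hB.1 hww v
    refine ⟨v', fun a => ?_, hvv⟩
    exact ((and_congr (hedge a) (cond v v' hvv a)).symm.trans (hv a))
  · intro v v' hvv a
    exact and_congr ((hB.1 w w' hww).2.2 v v' hvv a) (cond v v' hvv a)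

lemma refP_sim {M : KModel AP Ag W} {M' : KModel AP Ag W'} {B : W → W' → Prop}
    (hB : IsPMBisim M M' B) (hM : ∀ a, Equivalence (M.R a))
    (hM' : ∀ a, Equivalence (M'.R a)) {X : Set W} {X' : Set W'}
    (hX : ∀ v v', B v v' → (v ∈ X ↔ v' ∈ X')) {A : Set Ag}
    {s : W} {s' : W'} (hss : B s s') :
    IsPMSim (M.refP s X A) (M'.refP s' X' A) B := by
  intro w w' hww
  have cond : ∀ v v', B v v' → ∀ a,
      ((a ∈ A → ckRel M A s w → (w ∈ X ↔ v ∈ X)) ↔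
        (a ∈ A → ckRel M' A s' w' → (w' ∈ X' ↔ v' ∈ X'))) := by
    intro v v' hv a
    have h2 := hX w w' hww
    have h3 := hX v v' hv
    constructor
    · intro h ha hr
      rw [← h2, ← h3]
      exact h ha ((ckRel_iff hB hM hM' ⟨a, ha⟩ hss hww).mpr hr)
    · intro h ha hr
      rw [h2, h3]
      exact h ha ((ckRel_iff hB hM hM' ⟨a, ha⟩ hss hww).mp hr)
  refine ⟨(hB.1 w w' hww).1, ?_, ?_⟩
  · intro A₀ v hv
    obtain ⟨v', hvv, hedge⟩ := match_world hB.1 hww v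
    refine ⟨v', fun a => ?_, hvv⟩
    exact ((and_congr (hedge a) (cond v v' hvv a)).symm.trans (hv a))
  · intro v v' hvv a
    exact and_congr ((hB.1 w w' hww).2.2 v v' hvv a) (cond v v' hvv a)

lemma refM_bisim {M : KModel AP Ag W} {M' : KModel AP Ag W'} {B : W → W' → Prop}
    (hB : IsPMBisim M M' B) {X : Set W} {X' : Set W'}
    (hX : ∀ v v', B v v' → (v ∈ X ↔ v' ∈ X')) {A : Set Ag}
    {s : W} {s' : W'} (hss : B s s') :
    IsPMBisim (M.refM s X A) (M'.refM s' X' A) B :=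
  ⟨refM_sim hB hX hss,
    refM_sim (bisim_flip hB) (fun v' v hv => (hX v v' hv).symm) hss⟩

lemma refP_bisim {M : KModel AP Ag W} {M' : KModel AP Ag W'} {B : W → W' → Prop}
    (hB : IsPMBisim M M' B) (hM : ∀ a, Equivalence (M.R a))
    (hM' : ∀ a, Equivalence (M'.R a)) {X : Set W} {X' : Set W'}
    (hX : ∀ v v', B v v' → (v ∈ X ↔ v' ∈ X')) {A : Set Ag}
    {s : W} {s' : W'} (hss : B s s') :
    IsPMBisim (M.refP s X A) (M'.refP s' X' A) B :=
  ⟨refP_sim hB hM hM' hX hss,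
    refP_sim (bisim_flip hB) hM' hM (fun v' v hv => (hX v v' hv).symm) hss⟩

lemma sat_invariance (θ : Form AP Ag) :
    ∀ {W W' : Type} (M : KModel AP Ag W) (M' : KModel AP Ag W'),
      (∀ a, Equivalence (M.R a)) → (∀ a, Equivalence (M'.R a)) →
      ∀ B : W → W' → Prop, IsPMBisim M M' B →
        ∀ w w', B w w' → (sat θ M w ↔ sat θ M' w') := by
  induction θ with
  | atom p =>
    intro W W' M M' _ _ B hB w w' hww
    exact (hB.1 w w' hww).1 p
  | neg φ ih =>
    intro W W' M M' hM hM' B hB w w' hww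
    exact not_congr (ih M M' hM hM' B hB w w' hww)
  | and φ ψ ih1 ih2 =>
    intro W W' M M' hM hM' B hB w w' hww
    exact and_congr (ih1 M M' hM hM' B hB w w' hww) (ih2 M M' hM hM' B hB w w' hww)
  | ck A φ ih =>
    intro W W' M M' hM hM' B hB w w' hww
    constructor
    · intro h v' hck
      obtain ⟨v, hckv, hv⟩ := ckRel_exists hB.2 hww hck
      exact (ih M M' hM hM' B hB v v' hv).mp (h v hckv)
    · intro h v hck
      obtain ⟨v', hckv, hv⟩ := ckRel_exists hB.1 hww hck
      exact (ih M M' hM hM' B hB v v' hv).mpr (h v' hckv)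
  | annP φ A ψ ih1 ih2 =>
    intro W W' M M' hM hM' B hB w w' hww
    have hφ : ∀ v v', B v v' →
        (v ∈ {v | sat φ M v} ↔ v' ∈ {v' | sat φ M' v'}) :=
      fun v v' hv => ih1 M M' hM hM' B hB v v' hv
    have hbis := refP_bisim hB hM hM' hφ (A := A) hww
    have hψ := ih2 _ _ (refP_equiv hM w _ A) (refP_equiv hM' w' _ A) B hbis w w' hww
    exact imp_congr (hφ w w' hww) hψ
  | annM φ A ψ ih1 ih2 =>
    intro W W' M M' hM hM' B hB w w' hww
    have hφ : ∀ v v', B v v' →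
        (v ∈ {v | sat φ M v} ↔ v' ∈ {v' | sat φ M' v'}) :=
      fun v v' hv => ih1 M M' hM hM' B hB v v' hv
    have hbis := refM_bisim hB hφ (A := A) hww
    have hψ := ih2 _ _ (refM_equiv hM w _ A) (refM_equiv hM' w' _ A) B hbis w w' hww
    exact imp_congr (hφ w w' hww) hψ

end Aux

/-- refinements of ±-bisimilar pointed models (by the same
formula and coalition) are again ±-bisimilar. -/
theorem pm_bisim_preserved_by_refinement {W W' : Type} [Fintype Ag]
    (M : KModel AP Ag W) (M' : KModel AP Ag W')
    (hM : ∀ a : Ag, Equivalence (M.R a)) (hM' : ∀ a : Ag, Equivalence (M'.R a))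
    (s : W) (s' : W') (h : ∃ B : W → W' → Prop, IsPMBisim M M' B ∧ B s s') :
    ∀ (θ : Form AP Ag) (A : Set Ag),
      (∃ B : W → W' → Prop,
        IsPMBisim (M.refM s {v | sat θ M v} A) (M'.refM s' {v | sat θ M' v} A) B ∧
          B s s') ∧
      (∃ B : W → W' → Prop,
        IsPMBisim (M.refP s {v | sat θ M v} A) (M'.refP s' {v | sat θ M' v} A) B ∧
          B s s') := by
  obtain ⟨B, hB, hss⟩ := h
  intro θ A
  have hφ : ∀ v v', B v v' →
      (v ∈ {v | sat θ M v} ↔ v' ∈ {v' | sat θ M' v'}) :=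
    fun v v' hv => sat_invariance θ M M' hM hM' B hB v v' hv
  exact ⟨⟨B, refM_bisim hB hφ (A := A) hss, hss⟩, ⟨B, refP_bisim hB hM hM' hφ (A := A) hss, hss⟩⟩
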